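/- Let H be a real Hilbert space with two inner products ⟨·,·⟩₁ and ⟨·,·⟩₂ inducing equivalent norms. Let G : H → H be a bounded linear operator symmetric with respect to ⟨·,·⟩₂, and let u ∈ H with G u = 0, u ≠ 0. If there exists c > 0 such that ⟨G x, x⟩₂ ≥ c ⟨x, x⟩₂ for all x with ⟨x, u⟩₁ = 0, then there exists c' > 0 such that ⟨G x, x⟩₂ ≥ c' ⟨x, x⟩₂ for all x with ⟨x, u⟩₂ = 0. -/

import Mathlib

/-- Cauchy–Schwarz for a positive semidefinite symmetric bilinear form. -/
lemma bilin_cauchy_schwarz {H : Type*} [AddCommGroup H] [Module ℝ H]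
    (ip2 : H →ₗ[ℝ] H →ₗ[ℝ] ℝ) (h2symm : ∀ x y, ip2 x y = ip2 y x)
    (h2nonneg : ∀ x, 0 ≤ ip2 x x) (x y : H) :
    (ip2 x y) ^ 2 ≤ ip2 x x * ip2 y y := by
  have key : ∀ t : ℝ, 0 ≤ ip2 y y * (t * t) + (2 * ip2 x y) * t + ip2 x x := by
    intro t
    have h := h2nonneg (t • y + x)
    simp only [map_add, map_smul, LinearMap.add_apply, LinearMap.smul_apply,
      smul_eq_mul] at h
    have he : ip2 y y * (t * t) + (2 * ip2 x y) * t + ip2 x x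
        = t * (t * ip2 y y + ip2 x y) + (t * ip2 y x + ip2 x x) := by
      rw [h2symm y x]; ring
    linarith [he ▸ h]
  have hd := discrim_le_zero key
  unfold discrim at hd
  nlinarith [hd]

/-- A Hilbert space with two equivalent inner products; an operator `G`
symmetric w.r.t. the second inner product, vanishing on `u`, and elliptic (w.r.t. the
second inner product) on the first-inner-product orthogonal complement of `u`, is also
elliptic on the second-inner-product orthogonal complement of `u`. -/
theorem stmt1 {H : Type*} [NormedAddCommGroup H] [InnerProductSpace ℝ H] [CompleteSpace H]
    (ip1 ip2 : H →ₗ[ℝ] H →ₗ[ℝ] ℝ)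
    (h1symm : ∀ x y, ip1 x y = ip1 y x) (h2symm : ∀ x y, ip2 x y = ip2 y x)
    (h1pos : ∀ x, x ≠ 0 → 0 < ip1 x x) (h2pos : ∀ x, x ≠ 0 → 0 < ip2 x x)
    (m M : ℝ) (hm : 0 < m) (hM : 0 < M)
    (hequiv : ∀ x, m * Real.sqrt (ip1 x x) ≤ Real.sqrt (ip2 x x) ∧
      Real.sqrt (ip2 x x) ≤ M * Real.sqrt (ip1 x x))
    (G : H →L[ℝ] H) (hGsymm : ∀ x y, ip2 (G x) y = ip2 x (G y))
    (u : H) (hu : u ≠ 0) (hGu : G u = 0)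
    (c : ℝ) (hc : 0 < c) (hell : ∀ x, ip1 x u = 0 → c * ip2 x x ≤ ip2 (G x) x) :
    ∃ c' : ℝ, 0 < c' ∧ ∀ x, ip2 x u = 0 → c' * ip2 x x ≤ ip2 (G x) x := by
  have h2nonneg : ∀ x, 0 ≤ ip2 x x := by
    intro x
    rcases eq_or_ne x 0 with rfl | hx
    · simp
    · exact (h2pos x hx).le
  refine ⟨c, hc, fun x hxu => ?_⟩
  rcases eq_or_ne x 0 with rfl | hx
  · simp
  set t : ℝ := ip1 x u / ip1 u u with ht
  set y : H := x - t • u with hy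
  have huu : ip1 u u ≠ 0 := (h1pos u hu).ne'
  have hy1 : ip1 y u = 0 := by
    simp only [hy, map_sub, map_smul, LinearMap.sub_apply, LinearMap.smul_apply, smul_eq_mul, ht]
    field_simp
    ring
  have hGx : G x = G y := by
    have : x = y + t • u := by simp [hy]
    rw [this, map_add, map_smul, hGu, smul_zero, add_zero]
  -- ip2 (G y) u = 0
  have hGyu : ip2 (G y) u = 0 := by
    rw [hGsymm, hGu]; simp
  have hxy : x = y + t • u := by simp [hy]
  have hA : ip2 (G x) x = ip2 (G y) y := by
    rw [hGx]
    conv_lhs => rw [hxy]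
    simp [hGyu]
  have hB : ip2 x x = ip2 x y := by
    calc ip2 x x = ip2 x (y + t • u) := by rw [← hxy]
      _ = ip2 x y := by simp [map_add, map_smul, hxu]
  have hcs := bilin_cauchy_schwarz ip2 h2symm h2nonneg x y
  have hxx : 0 < ip2 x x := h2pos x hx
  have hle : ip2 x x ≤ ip2 y y := by nlinarith [hcs, hB, hxx]
  have hgy := hell y hy1
  calc c * ip2 x x ≤ c * ip2 y y := by nlinarith
    _ ≤ ip2 (G y) y := hgy
    _ = ip2 (G x) x := hA.symm
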